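/- Let f : ℝⁿ₊ → ℝ be concave and positively homogeneous of degree 1, and let x be in the interior of ℝⁿ₊. If the sum over i of the negatives of the one-sided directional derivatives in the coordinate directions, ∑ᵢ (−f'(x; −eᵢ))·xᵢ, equals f(x), then for each i the directional derivatives satisfy −f'(x; −xᵢeᵢ) = f'(x; xᵢeᵢ), i.e. f is Gateaux differentiable in each coordinate direction at x. -/

import Mathlib

open Filter Topology

/-- One-sided directional derivative: `L` is the limit of `(f (x + t • d) - f x) / t` as `t ↓ 0`. -/
def HasDirDeriv {n : ℕ} (f : (Fin n → ℝ) → ℝ) (x d : Fin n → ℝ) (L : ℝ) : Prop :=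
  Tendsto (fun t : ℝ => (f (x + t • d) - f x) / t) (nhdsWithin 0 (Set.Ioi 0)) (nhds L)

section helpers

variable {n : ℕ} {f : (Fin n → ℝ) → ℝ} {x : Fin n → ℝ}

lemma coord_pos (hx : x ∈ interior {y : Fin n → ℝ | ∀ i, 0 ≤ y i}) (j : Fin n) : 0 < x j := by
  have hopen : IsOpen (Function.eval j '' interior {y : Fin n → ℝ | ∀ i, 0 ≤ y i}) :=
    (isOpenMap_eval j) _ isOpen_interior
  have hsub : Function.eval j '' interior {y : Fin n → ℝ | ∀ i, 0 ≤ y i} ⊆ Set.Ici 0 := by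
    rintro _ ⟨y, hy, rfl⟩; exact (interior_subset hy) j
  have h2 : Function.eval j '' interior {y : Fin n → ℝ | ∀ i, 0 ≤ y i} ⊆ interior (Set.Ici 0) :=
    interior_maximal hsub hopen
  rw [interior_Ici] at h2
  exact h2 ⟨x, hx, rfl⟩

lemma ev_mem (hpos : ∀ j, 0 < x j) (d : Fin n → ℝ) :
    ∀ᶠ t in 𝓝[>] (0:ℝ), (x + t • d) ∈ {y : Fin n → ℝ | ∀ i, 0 ≤ y i} := by
  have h : ∀ᶠ t in 𝓝 (0:ℝ), ∀ j, 0 ≤ (x + t • d) j := by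
    rw [eventually_all]
    intro j
    have hc : Tendsto (fun t : ℝ => x j + t * d j) (𝓝 0) (𝓝 (x j + 0 * d j)) :=
      (continuous_const.add (continuous_id.mul continuous_const)).tendsto 0
    simp only [zero_mul, add_zero] at hc
    filter_upwards [hc.eventually (eventually_gt_nhds (hpos j))] with t ht
    simpa using ht.le
  exact nhdsWithin_le_nhds h

lemma mulmap (c : ℝ) (hc : 0 < c) : Tendsto (fun t : ℝ => c * t) (𝓝[>] 0) (𝓝[>] 0) := by
  apply tendsto_nhdsWithin_of_tendsto_nhds_of_eventually_within
  · have h1 : Continuous (fun t : ℝ => c * t) := by fun_prop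
    have h2 := h1.tendsto 0
    simpa using h2.mono_left nhdsWithin_le_nhds
  · filter_upwards [self_mem_nhdsWithin] with t ht
    exact mul_pos hc ht

lemma dirDeriv_scale {d : Fin n → ℝ} {L : ℝ} (h : HasDirDeriv f x d L) {c : ℝ} (hc : 0 < c) :
    HasDirDeriv f x (c • d) (c * L) := by
  have h2 : Tendsto (fun t : ℝ => c * ((f (x + (c * t) • d) - f x) / (c * t)))
      (𝓝[>] 0) (𝓝 (c * L)) := (h.comp (mulmap c hc)).const_mul c
  apply h2.congr'
  filter_upwards [self_mem_nhdsWithin] with t ht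
  have htne : t ≠ 0 := ne_of_gt ht
  have hcne : c ≠ 0 := ne_of_gt hc
  rw [smul_smul]
  field_simp

lemma dirDeriv_zero : HasDirDeriv f x 0 0 := by
  have : (fun t : ℝ => (f (x + t • (0 : Fin n → ℝ)) - f x) / t) = fun _ => 0 := by
    funext t; simp
  rw [HasDirDeriv, this]
  exact tendsto_const_nhds

lemma dirDeriv_neg_x (hhom : ∀ c : ℝ, 0 < c → ∀ y, f (c • y) = c * f y) :
    HasDirDeriv f x (-x) (-(f x)) := by
  apply tendsto_const_nhds.congr'
  filter_upwards [Ioo_mem_nhdsGT_of_mem (Set.mem_Ico.mpr ⟨le_refl (0:ℝ), one_pos⟩)] with t ht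
  have h1 : x + t • (-x) = (1 - t) • x := by module
  rw [h1, hhom (1 - t) (by linarith [ht.2]), ]
  have htne : t ≠ 0 := ne_of_gt ht.1
  field_simp
  ring

lemma dirDeriv_shift (hhom : ∀ c : ℝ, 0 < c → ∀ y, f (c • y) = c * f y)
    {d : Fin n → ℝ} {M : ℝ} (h : HasDirDeriv f x (x + d) M) :
    HasDirDeriv f x d (M - f x) := by
  have hmap : Tendsto (fun s : ℝ => s / (1 - s)) (𝓝[>] 0) (𝓝[>] 0) := by
    apply tendsto_nhdsWithin_of_tendsto_nhds_of_eventually_within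
    · have hc : ContinuousAt (fun s : ℝ => s / (1 - s)) 0 := by
        apply ContinuousAt.div
        · exact continuousAt_id
        · fun_prop
        · norm_num
      simpa using hc.tendsto.mono_left nhdsWithin_le_nhds
    · filter_upwards [Ioo_mem_nhdsGT_of_mem (Set.mem_Ico.mpr ⟨le_refl (0:ℝ), one_pos⟩)] with s hs
      exact div_pos hs.1 (by linarith [hs.2])
  have h2 : Tendsto (fun s : ℝ =>
      (f (x + (s / (1 - s)) • (x + d)) - f x) / (s / (1 - s)) - f x) (𝓝[>] 0) (𝓝 (M - f x)) :=
    (h.comp hmap).sub_const (f x)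
  apply h2.congr'
  filter_upwards [Ioo_mem_nhdsGT_of_mem (Set.mem_Ico.mpr ⟨le_refl (0:ℝ), one_pos⟩)] with s hs
  have hs0 : s ≠ 0 := ne_of_gt hs.1
  have hs1 : (1:ℝ) - s ≠ 0 := by linarith [hs.2]
  have hs1' : (0:ℝ) < 1 - s := by linarith [hs.2]
  have hv : x + s • d = (1 - s) • (x + (s / (1 - s)) • (x + d)) := by
    rw [smul_add, smul_smul, mul_div_cancel₀ _ hs1]
    module
  rw [eq_comm]
  rw [hv, hhom (1 - s) hs1']
  field_simp
  ring

lemma superadd (hconc : ConcaveOn ℝ {y : Fin n → ℝ | ∀ i, 0 ≤ y i} f)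
    (hpos : ∀ j, 0 < x j) {ι : Type*} (s : Finset ι) (d : ι → Fin n → ℝ) (L : ι → ℝ)
    (hd : ∀ j ∈ s, HasDirDeriv f x (d j) (L j)) {M : ℝ}
    (hM : HasDirDeriv f x (∑ j ∈ s, d j) M) : ∑ j ∈ s, L j ≤ M := by
  rcases s.eq_empty_or_nonempty with rfl | hne
  · simp only [Finset.sum_empty] at hM ⊢
    have h0 : HasDirDeriv f x 0 0 := dirDeriv_zero
    exact le_of_eq (tendsto_nhds_unique h0 hM)
  · set k : ℝ := (s.card : ℝ) with hk_def
    have hk : 0 < k := by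
      simp only [hk_def, Nat.cast_pos]
      exact Finset.card_pos.mpr hne
    have hkne : k ≠ 0 := ne_of_gt hk
    have hR : Tendsto (fun t => ∑ j ∈ s, (f (x + (k * t) • d j) - f x) / (k * t))
        (𝓝[>] 0) (𝓝 (∑ j ∈ s, L j)) :=
      tendsto_finset_sum _ (fun j hj => (hd j hj).comp (mulmap k hk))
    refine le_of_tendsto_of_tendsto hR hM ?_
    have hmem : ∀ᶠ t in 𝓝[>] (0:ℝ), ∀ j ∈ s, (x + (k * t) • d j) ∈ {y : Fin n → ℝ | ∀ i, 0 ≤ y i} := by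
      rw [Filter.eventually_all_finset s]
      intro j hj
      filter_upwards [ev_mem hpos (k • d j)] with t ht
      simpa [smul_smul, mul_comm] using ht
    filter_upwards [hmem, self_mem_nhdsWithin] with t hmemt ht
    have ht0 : (0:ℝ) < t := ht
    have hkt : 0 < k * t := mul_pos hk ht0
    have jensen := hconc.le_map_sum (t := s) (w := fun _ => 1 / k)
      (p := fun j => x + (k * t) • d j) (fun _ _ => by positivity)
      (by rw [Finset.sum_const, nsmul_eq_mul, ← hk_def]; field_simp) (fun j hj => hmemt j hj)
    have hps : ∑ j ∈ s, (1 / k : ℝ) • (x + (k * t) • d j) = x + t • ∑ j ∈ s, d j := by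
      simp only [smul_add, Finset.sum_add_distrib, smul_smul, Finset.sum_const]
      congr 1
      · rw [← Nat.cast_smul_eq_nsmul ℝ, smul_smul, ← hk_def]
        rw [mul_one_div, div_self hkne, one_smul]
      · rw [Finset.smul_sum]
        apply Finset.sum_congr rfl
        intro j _
        congr 1
        field_simp
    rw [hps] at jensen
    simp only [smul_eq_mul] at jensen
    have hcard : ((s.card : ℝ)) = k := hk_def.symm
    calc ∑ j ∈ s, (f (x + (k * t) • d j) - f x) / (k * t)
        = ((∑ j ∈ s, (1 / k) * f (x + (k * t) • d j)) - f x) / t := by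
          rw [← Finset.sum_div, Finset.sum_sub_distrib, Finset.sum_const, nsmul_eq_mul, hcard,
            ← Finset.mul_sum]
          field_simp
      _ ≤ (f (x + t • ∑ j ∈ s, d j) - f x) / t := by
          gcongr

end helpers

theorem stmt1 {n : ℕ} (f : (Fin n → ℝ) → ℝ) (x : Fin n → ℝ)
    (hconc : ConcaveOn ℝ {y : Fin n → ℝ | ∀ i, 0 ≤ y i} f)
    (hhom : ∀ c : ℝ, 0 < c → ∀ y, f (c • y) = c * f y)
    (hx : x ∈ interior {y : Fin n → ℝ | ∀ i, 0 ≤ y i})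
    (Dneg P N : Fin n → ℝ)
    (hDneg : ∀ i, HasDirDeriv f x (-(Pi.single i 1)) (Dneg i))
    (hP : ∀ i, HasDirDeriv f x (x i • (Pi.single i 1 : Fin n → ℝ)) (P i))
    (hN : ∀ i, HasDirDeriv f x (-(x i • (Pi.single i 1 : Fin n → ℝ))) (N i))
    (heuler : ∑ i, (-(Dneg i)) * x i = f x) :
    ∀ i, -(N i) = P i := by
  intro i
  have hpos : ∀ j, 0 < x j := coord_pos hx
  have hNval : ∀ j, N j = x j * Dneg j := by
    intro j
    have h1 := dirDeriv_scale (hDneg j) (hpos j)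
    rw [smul_neg] at h1
    exact tendsto_nhds_unique (hN j) h1
  have hsumN : ∑ j, N j = -(f x) := by
    rw [← heuler, ← Finset.sum_neg_distrib]
    apply Finset.sum_congr rfl
    intro j _
    rw [hNval j]; ring
  have hA : HasDirDeriv f x (x i • (Pi.single i 1 : Fin n → ℝ) - x) (P i - f x) := by
    apply dirDeriv_shift hhom
    have h := hP i
    rwa [show x i • (Pi.single i 1 : Fin n → ℝ) =
      x + (x i • (Pi.single i 1 : Fin n → ℝ) - x) by module] at h
  have hNegx : HasDirDeriv f x (-x) (-(f x)) := dirDeriv_neg_x hhom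
  have hineq1 : (P i - f x) + N i ≤ -(f x) := by
    have hs := superadd hconc hpos (Finset.univ : Finset (Fin 2))
      (fun j => if j = 0 then x i • (Pi.single i 1 : Fin n → ℝ) - x
        else -(x i • (Pi.single i 1 : Fin n → ℝ)))
      (fun j => if j = 0 then P i - f x else N i)
      (by intro j _; fin_cases j
          · simpa using hA
          · simpa using hN i)
      (M := -(f x))
      (by have hsum : (∑ j : Fin 2, (if j = 0 then x i • (Pi.single i 1 : Fin n → ℝ) - x
              else -(x i • (Pi.single i 1 : Fin n → ℝ)))) = -x := by
            rw [Fin.sum_univ_two, if_pos rfl, if_neg (by decide)]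
            module
          rw [hsum]; exact hNegx)
    simpa [Fin.sum_univ_two] using hs
  have hineq2 : -(f x) - N i ≤ P i - f x := by
    have hsum2 : (∑ j ∈ Finset.univ.erase i, -(x j • (Pi.single j 1 : Fin n → ℝ)))
        = x i • (Pi.single i 1 : Fin n → ℝ) - x := by
      have hxsum : (∑ j, x j • (Pi.single j 1 : Fin n → ℝ)) = x := by
        funext k
        simp [Finset.sum_apply, Pi.single_apply, mul_ite]
      rw [← Finset.sum_erase_add _ _ (Finset.mem_univ i)] at hxsum
      have he : ∑ j ∈ Finset.univ.erase i, x j • (Pi.single j 1 : Fin n → ℝ)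
          = x - x i • (Pi.single i 1 : Fin n → ℝ) := eq_sub_of_add_eq hxsum
      rw [Finset.sum_neg_distrib, he]
      abel
    have hs := superadd hconc hpos (Finset.univ.erase i)
      (fun j => -(x j • (Pi.single j 1 : Fin n → ℝ))) N
      (fun j _ => hN j) (M := P i - f x) (by rw [hsum2]; exact hA)
    have h3 := Finset.sum_erase_add Finset.univ N (Finset.mem_univ i)
    linarith [hs, h3, hsumN]
  linarith [hineq1, hineq2]
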